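/- Let a < b be real numbers, let f : ℝ → ℝ be three times differentiable on [a, b], let M₂ = sup_{t ∈ [a,b]} |f″(t)| and M₃ = sup_{t ∈ [a,b]} |f‴(t)| be finite, and let θ be a real number with 1/2 ≤ θ ≤ 1. Then the truncation error of the θ-scheme satisfies |θ·f′(b) + (1 − θ)·f′(a) − (f(b) − f(a))/(b − a)| ≤ (θ − 1/2)·(b − a)·M₂ + ((1 − θ)/2 + 1/6)·(b − a)²·M₃. -/

import Mathlib

open Set

/-- First-order Taylor with Lagrange-type bound. -/
lemma taylor1 (a b C : ℝ) (hab : a ≤ b) (g g' g'' : ℝ → ℝ)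
    (hg : ∀ t ∈ Set.Icc a b, HasDerivAt g (g' t) t)
    (hg' : ∀ t ∈ Set.Icc a b, HasDerivAt g' (g'' t) t)
    (hC : ∀ t ∈ Set.Icc a b, |g'' t| ≤ C) :
    |g b - g a - (b - a) * g' a| ≤ C * (b - a) ^ 2 / 2 := by
  have key : ∀ t ∈ Set.Icc a b, |g' t - g' a| ≤ C * (t - a) := by
    intro t ht
    have h := (convex_Icc a b).norm_image_sub_le_of_norm_hasDerivWithin_le
      (f := g') (f' := g'') (fun x hx => (hg' x hx).hasDerivWithinAt)
      (fun x hx => hC x hx) (Set.left_mem_Icc.2 hab) ht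
    rw [Real.norm_eq_abs, Real.norm_eq_abs] at h
    calc |g' t - g' a| ≤ C * |t - a| := h
      _ = C * (t - a) := by rw [abs_of_nonneg (by linarith [ht.1])]
  have hψ' : ∀ t ∈ Set.Icc a b, HasDerivAt (fun t => g t - g a - (t - a) * g' a)
      (g' t - g' a) t := by
    intro t ht
    have h := ((hg t ht).sub_const (g a)).sub (((hasDerivAt_id t).sub_const a).mul_const (g' a))
    simpa [Pi.sub_def] using h
  have hB : ∀ x : ℝ, HasDerivAt (fun t => C * (t - a) ^ 2 / 2) (C * (x - a)) x := by
    intro x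
    have h := ((((hasDerivAt_id x).sub_const a).pow 2).const_mul C).div_const 2
    refine h.congr_deriv ?_
    simp only [id_eq]
    push_cast
    ring
  have main := image_norm_le_of_norm_deriv_right_le_deriv_boundary
    (f := fun t => g t - g a - (t - a) * g' a) (f' := fun t => g' t - g' a) (a := a) (b := b)
    (B := fun t => C * (t - a) ^ 2 / 2) (B' := fun t => C * (t - a))
    (fun t ht => (hψ' t ht).continuousAt.continuousWithinAt)
    (fun x hx => ((hψ' x (Set.Ico_subset_Icc_self hx)).hasDerivWithinAt))
    (by simp) hB
    (fun x hx => by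
      rw [Real.norm_eq_abs]; exact key x (Set.Ico_subset_Icc_self hx))
    (Set.right_mem_Icc.2 hab)
  simpa using main

/-- Second-order Taylor with Lagrange-type bound. -/
lemma taylor2 (a b C : ℝ) (hab : a ≤ b) (g g' g'' g''' : ℝ → ℝ)
    (hg : ∀ t ∈ Set.Icc a b, HasDerivAt g (g' t) t)
    (hg' : ∀ t ∈ Set.Icc a b, HasDerivAt g' (g'' t) t)
    (hg'' : ∀ t ∈ Set.Icc a b, HasDerivAt g'' (g''' t) t)
    (hC : ∀ t ∈ Set.Icc a b, |g''' t| ≤ C) :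
    |g b - g a - (b - a) * g' a - (b - a) ^ 2 / 2 * g'' a| ≤ C * (b - a) ^ 3 / 6 := by
  have key : ∀ t ∈ Set.Icc a b, |g' t - g' a - (t - a) * g'' a| ≤ C * (t - a) ^ 2 / 2 := by
    intro t ht
    exact taylor1 a t C ht.1 g' g'' g'''
      (fun x hx => hg' x ⟨hx.1, hx.2.trans ht.2⟩)
      (fun x hx => hg'' x ⟨hx.1, hx.2.trans ht.2⟩)
      (fun x hx => hC x ⟨hx.1, hx.2.trans ht.2⟩)
  have hφ' : ∀ t ∈ Set.Icc a b, HasDerivAt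
      (fun t => g t - g a - (t - a) * g' a - (t - a) ^ 2 / 2 * g'' a)
      (g' t - g' a - (t - a) * g'' a) t := by
    intro t ht
    have h := (((hg t ht).sub_const (g a)).sub
        (((hasDerivAt_id t).sub_const a).mul_const (g' a))).sub
        ((((((hasDerivAt_id t).sub_const a).pow 2)).div_const 2).mul_const (g'' a))
    refine h.congr_deriv ?_
    simp only [id_eq]
    push_cast
    ring
  have hB : ∀ x : ℝ, HasDerivAt (fun t => C * (t - a) ^ 3 / 6) (C * (x - a) ^ 2 / 2) x := by
    intro x
    have h := ((((hasDerivAt_id x).sub_const a).pow 3).const_mul C).div_const 6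
    refine h.congr_deriv ?_
    simp only [id_eq]
    push_cast
    ring
  have main := image_norm_le_of_norm_deriv_right_le_deriv_boundary
    (f := fun t => g t - g a - (t - a) * g' a - (t - a) ^ 2 / 2 * g'' a)
    (f' := fun t => g' t - g' a - (t - a) * g'' a) (a := a) (b := b)
    (B := fun t => C * (t - a) ^ 3 / 6) (B' := fun t => C * (t - a) ^ 2 / 2)
    (fun t ht => (hφ' t ht).continuousAt.continuousWithinAt)
    (fun x hx => ((hφ' x (Set.Ico_subset_Icc_self hx)).hasDerivWithinAt))
    (by simp) hB
    (fun x hx => by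
      rw [Real.norm_eq_abs]; exact key x (Set.Ico_subset_Icc_self hx))
    (Set.right_mem_Icc.2 hab)
  simpa using main

/-- Truncation error of the θ-scheme. Let `a < b`, let `f` be
three times differentiable on `[a,b]` with derivatives `f'`, `f''`, `f'''`, let
`M₂ = sup_{[a,b]} |f''|` and `M₃ = sup_{[a,b]} |f'''|` be finite, and let
`1/2 ≤ θ ≤ 1`. Then
`|θf'(b) + (1 − θ)f'(a) − (f(b) − f(a))/(b − a)|
  ≤ (θ − 1/2)(b − a)M₂ + ((1 − θ)/2 + 1/6)(b − a)²M₃`. -/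
theorem theta_scheme_truncation_error
    (a b : ℝ) (hab : a < b) (f f' f'' f''' : ℝ → ℝ)
    (h1 : ∀ t ∈ Set.Icc a b, HasDerivAt f (f' t) t)
    (h2 : ∀ t ∈ Set.Icc a b, HasDerivAt f' (f'' t) t)
    (h3 : ∀ t ∈ Set.Icc a b, HasDerivAt f'' (f''' t) t)
    (hM₂ : BddAbove ((fun t => |f'' t|) '' Set.Icc a b))
    (hM₃ : BddAbove ((fun t => |f''' t|) '' Set.Icc a b))
    (θ : ℝ) (hθ1 : 1/2 ≤ θ) (hθ2 : θ ≤ 1) :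
    |θ * f' b + (1 - θ) * f' a - (f b - f a) / (b - a)|
      ≤ (θ - 1/2) * (b - a) * sSup ((fun t => |f'' t|) '' Set.Icc a b)
        + ((1 - θ)/2 + 1/6) * (b - a)^2
            * sSup ((fun t => |f''' t|) '' Set.Icc a b) := by
  set M₂ := sSup ((fun t => |f'' t|) '' Set.Icc a b) with hM2def
  set M₃ := sSup ((fun t => |f''' t|) '' Set.Icc a b) with hM3def
  have hb : b ∈ Set.Icc a b := Set.right_mem_Icc.2 hab.le
  have hfb2 : |f'' b| ≤ M₂ := le_csSup hM₂ ⟨b, hb, rfl⟩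
  have hM₃' : ∀ t ∈ Set.Icc a b, |f''' t| ≤ M₃ := fun t ht => le_csSup hM₃ ⟨t, ht, rfl⟩
  -- reflected functions
  have hmem : ∀ t ∈ Set.Icc a b, a + b - t ∈ Set.Icc a b := by
    intro t ht
    exact ⟨by linarith [ht.2], by linarith [ht.1]⟩
  have hrefl : ∀ t, HasDerivAt (fun s => a + b - s) (-1 : ℝ) t := by
    intro t
    simpa [Pi.sub_def] using (hasDerivAt_const t (a + b)).sub (hasDerivAt_id t)
  have hF : ∀ t ∈ Set.Icc a b, HasDerivAt (fun s => f (a + b - s)) (-f' (a + b - t)) t := by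
    intro t ht
    have h := (h1 _ (hmem t ht)).comp t (hrefl t)
    simpa [mul_comm, Function.comp_def, Pi.neg_def] using h
  have hF' : ∀ t ∈ Set.Icc a b,
      HasDerivAt (fun s => -f' (a + b - s)) (f'' (a + b - t)) t := by
    intro t ht
    have h := ((h2 _ (hmem t ht)).comp t (hrefl t)).neg
    simpa [mul_comm, Function.comp_def, Pi.neg_def] using h
  have hF'' : ∀ t ∈ Set.Icc a b,
      HasDerivAt (fun s => f'' (a + b - s)) (-f''' (a + b - t)) t := by
    intro t ht
    have h := (h3 _ (hmem t ht)).comp t (hrefl t)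
    simpa [mul_comm, Function.comp_def, Pi.neg_def] using h
  have hFC : ∀ t ∈ Set.Icc a b, |(fun s => -f''' (a + b - s)) t| ≤ M₃ := by
    intro t ht
    simpa using hM₃' _ (hmem t ht)
  have hA := taylor2 a b M₃ hab.le (fun s => f (a + b - s)) (fun s => -f' (a + b - s))
    (fun s => f'' (a + b - s)) (fun s => -f''' (a + b - s)) hF hF' hF'' hFC
  have hBq := taylor1 a b M₃ hab.le (fun s => -f' (a + b - s)) (fun s => f'' (a + b - s))
    (fun s => -f''' (a + b - s)) hF' hF'' hFC
  simp only [add_sub_cancel_left, add_sub_cancel_right] at hA hBq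
  -- hA : |f a - f b - (b-a)*(-f' b) - (b-a)^2/2 * f'' b| ≤ M₃*(b-a)^3/6
  -- hBq : |-f' a - -f' b - (b-a)*f'' b| ≤ M₃*(b-a)^2/2
  have hbapos : (0:ℝ) < b - a := by linarith
  have hM₃0 : 0 ≤ M₃ := le_trans (abs_nonneg _) (hM₃' b hb)
  set A := f a - f b - (b - a) * (-f' b) - (b - a) ^ 2 / 2 * f'' b with hAdef
  set Bq := -f' a - -f' b - (b - a) * f'' b with hBdef
  have hE : θ * f' b + (1 - θ) * f' a - (f b - f a) / (b - a)
      = (θ - 1/2) * (b - a) * f'' b + (-(1 - θ)) * Bq + A / (b - a) := by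
    rw [hAdef, hBdef]
    field_simp
    ring
  rw [hE]
  have e1 : |(θ - 1/2) * (b - a) * f'' b| ≤ (θ - 1/2) * (b - a) * M₂ := by
    rw [abs_mul, abs_mul, abs_of_nonneg (by linarith : (0:ℝ) ≤ θ - 1/2),
      abs_of_nonneg hbapos.le]
    exact mul_le_mul_of_nonneg_left hfb2 (by nlinarith)
  have e2 : |(-(1 - θ)) * Bq| ≤ (1 - θ) * (M₃ * (b - a) ^ 2 / 2) := by
    rw [abs_mul, abs_neg, abs_of_nonneg (by linarith : (0:ℝ) ≤ 1 - θ)]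
    exact mul_le_mul_of_nonneg_left hBq (by linarith)
  have e3 : |A / (b - a)| ≤ M₃ * (b - a) ^ 2 / 6 := by
    rw [abs_div, abs_of_nonneg hbapos.le, div_le_iff₀ hbapos]
    calc |A| ≤ M₃ * (b - a) ^ 3 / 6 := hA
      _ = M₃ * (b - a) ^ 2 / 6 * (b - a) := by ring
  calc |(θ - 1/2) * (b - a) * f'' b + (-(1 - θ)) * Bq + A / (b - a)|
      ≤ |(θ - 1/2) * (b - a) * f'' b + (-(1 - θ)) * Bq| + |A / (b - a)| := abs_add_le _ _
    _ ≤ |(θ - 1/2) * (b - a) * f'' b| + |(-(1 - θ)) * Bq| + |A / (b - a)| := by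
        gcongr; exact abs_add_le _ _
    _ ≤ (θ - 1/2) * (b - a) * M₂ + (1 - θ) * (M₃ * (b - a) ^ 2 / 2) + M₃ * (b - a) ^ 2 / 6 := by
        gcongr
    _ = (θ - 1/2) * (b - a) * M₂ + ((1 - θ)/2 + 1/6) * (b - a)^2 * M₃ := by ring
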